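/- Let f = (f_1, …, f_s) be symmetric polynomials in ℚ[x_1, …, x_n] and let λ be a partition of n of length ℓ. If the Jacobian matrix of f has rank s at every point of the complex zero set V(f) ⊂ ℂ^n, then the Jacobian matrix of T_λ(f) with respect to the ℓ variables z_{j,i} has rank s at every point of the complex zero set V(T_λ(f)) ⊂ ℂ^ℓ. -/

import Mathlib

open MvPolynomial

/-- `σ_{j,i} = Σ_{r<i} t_r n_r + j · n_i` (with `j` zero-based). -/
def sigmaShift {k : ℕ} (nn t : Fin k → ℕ) (i : Fin k) (j : ℕ) : ℕ :=
  (∑ r ∈ Finset.Iio i, t r * nn r) + j * nn i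

/-- The index set `I_{j,i}` (as zero-based indices of `Fin n`). -/
def Iset (n : ℕ) {k : ℕ} (nn t : Fin k → ℕ) (i : Fin k) (j : ℕ) : Finset (Fin n) :=
  Finset.univ.filter fun m =>
    sigmaShift nn t i j ≤ (m : ℕ) ∧ (m : ℕ) < sigmaShift nn t i j + nn i

lemma pderiv_rename_sum {σ τ : Type*} [DecidableEq τ] [Fintype σ] [DecidableEq σ]
    (φ : σ → τ) (v : τ) (p : MvPolynomial σ ℚ) :
    pderiv v (rename φ p) =
      ∑ m ∈ Finset.univ.filter (fun m => φ m = v), rename φ (pderiv m p) := by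
  induction p using MvPolynomial.induction_on with
  | C a => simp
  | add p q hp hq => simp [hp, hq, Finset.sum_add_distrib]
  | mul_X p m h =>
    simp only [map_mul, rename_X, pderiv_mul, h, pderiv_X, Pi.single_apply, map_add,
      Finset.sum_add_distrib, mul_ite, mul_one, mul_zero, apply_ite (rename φ), map_zero,
      Finset.sum_ite_eq', Finset.mem_filter, Finset.mem_univ, true_and, Finset.sum_mul]
    split_ifs <;> simp_all

/-- if the Jacobian of the symmetric system `f` has rank `s` at every
complex zero of `f`, then the Jacobian of the sliced system `T_λ(f)` has rank `s` at
every complex zero of `T_λ(f)`. -/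
theorem Tlambda_preserves_conditionA
    (n k s : ℕ) (nn t : Fin k → ℕ)
    (hmono : StrictMono nn) (hnpos : ∀ i, 0 < nn i) (htpos : ∀ i, 0 < t i)
    (hsum : ∑ i, t i * nn i = n)
    (idx : Fin n → (i : Fin k) × Fin (t i))
    (hidx : ∀ (m : Fin n) (i : Fin k) (j : Fin (t i)),
      idx m = ⟨i, j⟩ ↔ m ∈ Iset n nn t i (j : ℕ))
    (f : Fin s → MvPolynomial (Fin n) ℚ)
    (hf : ∀ a, ∀ σ : Equiv.Perm (Fin n), rename σ (f a) = f a)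
    (hA : ∀ w : Fin n → ℂ, (∀ a, aeval w (f a) = 0) →
      (Matrix.of fun (a : Fin s) (m : Fin n) => aeval w (pderiv m (f a))).rank = s) :
    ∀ w : ((i : Fin k) × Fin (t i)) → ℂ,
      (∀ a, aeval w (aeval (fun m : Fin n =>
          (X (idx m) : MvPolynomial ((i : Fin k) × Fin (t i)) ℚ)) (f a)) = 0) →
      (Matrix.of fun (a : Fin s) (v : (i : Fin k) × Fin (t i)) =>
        aeval w (pderiv v (aeval (fun m : Fin n =>
          (X (idx m) : MvPolynomial ((i : Fin k) × Fin (t i)) ℚ)) (f a)))).rank = s := by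
  classical
  intro w hw
  set W : Fin n → ℂ := fun m => w (idx m) with hWdef
  have hren : ∀ p : MvPolynomial (Fin n) ℚ,
      aeval (fun m : Fin n => (X (idx m) : MvPolynomial ((i : Fin k) × Fin (t i)) ℚ)) p
        = rename idx p := fun p => by
      induction p using MvPolynomial.induction_on <;> simp_all
  have key : ∀ q : MvPolynomial (Fin n) ℚ, aeval w (rename idx q) = aeval W q := by
    intro q; rw [aeval_rename]; rfl
  have hWzero : ∀ a, aeval W (f a) = 0 := by
    intro a
    have := hw a
    rwa [hren, key] at this
  -- symmetry of the Jacobian columns within fibers of `idx`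
  have hsym : ∀ (a : Fin s) (m m' : Fin n), idx m = idx m' →
      aeval W (pderiv m (f a)) = aeval W (pderiv m' (f a)) := by
    intro a m m' hmm
    set σ : Equiv.Perm (Fin n) := Equiv.swap m m' with hσdef
    have hWσ : (W ∘ σ) = W := by
      funext x
      simp only [Function.comp_apply, hWdef, hσdef]
      rcases eq_or_ne x m with rfl | hx
      · rw [Equiv.swap_apply_left, ← hmm]
      rcases eq_or_ne x m' with rfl | hx'
      · rw [Equiv.swap_apply_right, hmm]
      · rw [Equiv.swap_apply_of_ne_of_ne hx hx']
    have h1 : pderiv m' (f a) = rename σ (pderiv m (f a)) := by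
      have h2 := pderiv_rename (σ.injective) m (f a)
      rwa [hf a σ, show σ m = m' from Equiv.swap_apply_left m m'] at h2
    rw [h1, aeval_rename, show (W ∘ σ : Fin n → ℂ) = W from hWσ]
  -- matrices
  set J : Matrix (Fin s) (Fin n) ℂ :=
    Matrix.of fun a m => aeval W (pderiv m (f a)) with hJdef
  set JT : Matrix (Fin s) ((i : Fin k) × Fin (t i)) ℂ :=
    Matrix.of fun a v => aeval w (pderiv v (aeval (fun m : Fin n =>
      (X (idx m) : MvPolynomial ((i : Fin k) × Fin (t i)) ℚ)) (f a))) with hJTdef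
  have hcol : ∀ (a : Fin s) (v : (i : Fin k) × Fin (t i)),
      JT a v = ∑ m ∈ Finset.univ.filter (fun m => idx m = v), J a m := by
    intro a v
    simp only [hJTdef, hJdef, Matrix.of_apply, hren, pderiv_rename_sum, map_sum]
    exact Finset.sum_congr rfl fun m _ => key _
  set N : Matrix ((i : Fin k) × Fin (t i)) (Fin n) ℂ :=
    Matrix.of fun v m => if idx m = v then
      ((Finset.univ.filter (fun m' => idx m' = idx m)).card : ℂ)⁻¹ else 0 with hNdef
  have hJ : J = JT * N := by
    ext a m
    rw [Matrix.mul_apply]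
    have hcard : (0 : ℕ) < (Finset.univ.filter (fun m' => idx m' = idx m)).card :=
      Finset.card_pos.mpr ⟨m, by simp⟩
    rw [Finset.sum_eq_single (idx m)
      (fun v _ hv => by simp [hNdef, Ne.symm hv]) (by simp)]
    rw [hcol a (idx m)]
    have hall : ∀ m' ∈ Finset.univ.filter (fun m' => idx m' = idx m),
        J a m' = J a m := by
      intro m' hm'
      simp only [Finset.mem_filter] at hm'
      exact hsym a m' m hm'.2
    rw [Finset.sum_congr rfl hall, Finset.sum_const, nsmul_eq_mul]
    have hc : (((Finset.univ.filter (fun m' => idx m' = idx m)).card : ℂ)) ≠ 0 :=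
      Nat.cast_ne_zero.mpr hcard.ne'
    simp only [hNdef, Matrix.of_apply, if_true, if_pos rfl]
    rw [mul_right_comm, mul_inv_cancel₀ hc, one_mul]
  have hrankJ : J.rank = s := hA W hWzero
  have h1 : J.rank ≤ JT.rank := hJ ▸ Matrix.rank_mul_le_left JT N
  have h2 : JT.rank ≤ s := (Matrix.rank_le_card_height JT).trans (by simp)
  omega
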